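/- Let G(V,E) be a graph with degrees z_v and particle numbers m_v ∈ {0,...,z_v} evolving under firing/anti-firing moves (a fire at v moves one particle to each neighbor, an anti-fire takes one from each neighbor, subject to 0 ≤ m_w ≤ z_w). Let R ⊆ V be a set of vertices such that every v ∈ R has at least one neighbor also in R, and let R̄ = R ∪ (union of neighborhoods of vertices of R). If the initial configuration has m_w = 0 for all w ∈ R̄, then for every configuration reachable by any sequence of allowed moves, m_v = 0 for all v ∈ R. -/

import Mathlib

variable {V : Type*}

/-- A firing move at vertex `v`. -/
def fireStep (G : SimpleGraph V) [DecidableRel G.Adj] [G.LocallyFinite]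
    (v : V) (m m' : V → ℕ) : Prop :=
  m v = G.degree v ∧ (∀ w, G.Adj v w → m w < G.degree w) ∧
    m' v = 0 ∧ (∀ w, G.Adj v w → m' w = m w + 1) ∧
    (∀ w, w ≠ v → ¬ G.Adj v w → m' w = m w)

/-- An anti-firing move at vertex `v`: the inverse of a firing. -/
def antifireStep (G : SimpleGraph V) [DecidableRel G.Adj] [G.LocallyFinite]
    (v : V) (m m' : V → ℕ) : Prop :=
  m v = 0 ∧ (∀ w, G.Adj v w → 1 ≤ m w) ∧
    m' v = G.degree v ∧ (∀ w, G.Adj v w → m' w + 1 = m w) ∧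
    (∀ w, w ≠ v → ¬ G.Adj v w → m' w = m w)

/-- A single allowed move of the dynamics, applied anywhere in the graph. -/
def moveStep (G : SimpleGraph V) [DecidableRel G.Adj] [G.LocallyFinite]
    (m m' : V → ℕ) : Prop :=
  ∃ v, fireStep G v m m' ∨ antifireStep G v m m'

set_option maxHeartbeats 1000000

open Classical in
/-- Net firing count of vertex `z` during the first `t` steps. -/
noncomputable def netFire (vtx : ℕ → V) (dir : ℕ → ℤ) (t : ℕ) (z : V) : ℤ :=
  ∑ i ∈ Finset.range t, if vtx i = z then dir i else 0

lemma exists_chain (G : SimpleGraph V) [DecidableRel G.Adj] [G.LocallyFinite]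
    {m₀ m : V → ℕ} (h : Relation.ReflTransGen (moveStep G) m₀ m) :
    ∃ n : ℕ, ∃ f : ℕ → V → ℕ, f 0 = m₀ ∧ f n = m ∧ ∀ i < n, moveStep G (f i) (f (i+1)) := by
  induction h with
  | refl => exact ⟨0, fun _ => m₀, rfl, rfl, fun i hi => absurd hi (Nat.not_lt_zero i)⟩
  | @tail b c hab hbc ih =>
      obtain ⟨n, f, h0, hn, hs⟩ := ih
      refine ⟨n+1, fun i => if i < n+1 then f i else c, by simp [h0], by simp, ?_⟩
      intro i hi
      rcases Nat.lt_or_ge i n with hin | hin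
      · simpa [Nat.lt_succ_of_lt hin, hi, Nat.succ_lt_succ hin] using hs i hin
      · have : i = n := by omega
        subst this
        simp only [Nat.lt_succ_self, if_pos, Nat.lt_irrefl]
        simpa [hn] using hbc

open Classical

lemma netFire_formula (G : SimpleGraph V) [DecidableRel G.Adj] [G.LocallyFinite]
    (n : ℕ) (f : ℕ → V → ℕ) (vtx : ℕ → V) (dir : ℕ → ℤ)
    (hgs : ∀ i < n, (dir i = 1 ∧ fireStep G (vtx i) (f i) (f (i+1))) ∨
      (dir i = -1 ∧ antifireStep G (vtx i) (f i) (f (i+1)))) :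
    ∀ t ≤ n, ∀ y, (f t y : ℤ) = (f 0 y : ℤ)
      + (∑ z ∈ G.neighborFinset y, netFire vtx dir t z)
      - (G.degree y : ℤ) * netFire vtx dir t y := by
  intro t
  induction t with
  | zero => intro _ y; simp [netFire]
  | succ t ih =>
    intro ht y
    have hlt : t < n := ht
    have ih' := ih (le_of_lt hlt)
    have hsucc : ∀ z, netFire vtx dir (t+1) z
        = netFire vtx dir t z + (if vtx t = z then dir t else 0) := by
      intro z; exact Finset.sum_range_succ _ t
    have hsum : (∑ z ∈ G.neighborFinset y, netFire vtx dir (t+1) z)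
        = (∑ z ∈ G.neighborFinset y, netFire vtx dir t z)
          + (if vtx t ∈ G.neighborFinset y then dir t else 0) := by
      simp only [hsucc, Finset.sum_add_distrib, Finset.sum_ite_eq]
    rcases hgs t hlt with ⟨hd, hmv, hblk, hv0, hnbr, hoth⟩ | ⟨hd, hmv, hblk, hv0, hnbr, hoth⟩
    · -- fire at vtx t
      by_cases hyv : vtx t = y
      · subst hyv
        have hmem : vtx t ∉ G.neighborFinset (vtx t) := by
          simp [SimpleGraph.mem_neighborFinset]
        have h1 : (f (t+1) (vtx t) : ℤ) = 0 := by exact_mod_cast congrArg Nat.cast hv0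
        have h2 : (f t (vtx t) : ℤ) = (G.degree (vtx t) : ℤ) := by exact_mod_cast congrArg Nat.cast hmv
        rw [hsum, hsucc, if_neg hmem, if_pos rfl, hd]
        have := ih' (vtx t)
        push_cast [hv0]
        linarith
      · by_cases hadj : G.Adj (vtx t) y
        · have hmem : vtx t ∈ G.neighborFinset y := by
            simp [SimpleGraph.mem_neighborFinset]; exact hadj.symm
          have h1 : (f (t+1) y : ℤ) = (f t y : ℤ) + 1 := by
            have := hnbr y hadj; exact_mod_cast congrArg Nat.cast this
          rw [hsum, hsucc, if_pos hmem, if_neg hyv, hd]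
          have := ih' y
          linarith
        · have h1 : f (t+1) y = f t y := hoth y (fun h => hyv h.symm) hadj
          have hmem : vtx t ∉ G.neighborFinset y := by
            simp [SimpleGraph.mem_neighborFinset]; intro h; exact hadj h.symm
          rw [hsum, hsucc, if_neg hmem, if_neg hyv, h1]
          have := ih' y
          linarith
    · -- antifire at vtx t
      by_cases hyv : vtx t = y
      · subst hyv
        have hmem : vtx t ∉ G.neighborFinset (vtx t) := by
          simp [SimpleGraph.mem_neighborFinset]
        have h1 : (f (t+1) (vtx t) : ℤ) = (G.degree (vtx t) : ℤ) := by
          exact_mod_cast congrArg Nat.cast hv0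
        have h2 : (f t (vtx t) : ℤ) = 0 := by exact_mod_cast congrArg Nat.cast hmv
        rw [hsum, hsucc, if_neg hmem, if_pos rfl, hd]
        have := ih' (vtx t)
        linarith
      · by_cases hadj : G.Adj (vtx t) y
        · have hmem : vtx t ∈ G.neighborFinset y := by
            simp [SimpleGraph.mem_neighborFinset]; exact hadj.symm
          have h1 : (f (t+1) y : ℤ) + 1 = (f t y : ℤ) := by
            have := hnbr y hadj; exact_mod_cast congrArg Nat.cast this
          rw [hsum, hsucc, if_pos hmem, if_neg hyv, hd]
          have := ih' y
          linarith
        · have h1 : f (t+1) y = f t y := hoth y (fun h => hyv h.symm) hadj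
          have hmem : vtx t ∉ G.neighborFinset y := by
            simp [SimpleGraph.mem_neighborFinset]; intro h; exact hadj h.symm
          rw [hsum, hsucc, if_neg hmem, if_neg hyv, h1]
          have := ih' y
          linarith


lemma firstNonzero (d : ℕ → ℤ) :
    ∀ k lo hi, hi - lo ≤ k →
      (∃ j, lo ≤ j ∧ j < hi ∧ d j ≠ 0 ∧ ∀ i, lo ≤ i → i < j → d i = 0) ∨
      (∀ i, lo ≤ i → i < hi → d i = 0) := by
  intro k
  induction k with
  | zero => intro lo hi hk; right; intro i h1 h2; omega
  | succ k ih =>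
    intro lo hi hk
    rcases Nat.lt_or_ge lo hi with hlo | hlo
    · by_cases h0 : d lo = 0
      · rcases ih (lo+1) hi (by omega) with ⟨j, hj1, hj2, hj3, hj4⟩ | hall
        · left; exact ⟨j, by omega, hj2, hj3, fun i h1 h2 => by
            rcases Nat.lt_or_ge i (lo+1) with h | h
            · have : i = lo := by omega
              subst this; exact h0
            · exact hj4 i h h2⟩
        · right; intro i h1 h2
          rcases Nat.lt_or_ge i (lo+1) with h | h
          · have : i = lo := by omega
            subst this; exact h0
          · exact hall i h h2
      · left; exact ⟨lo, le_refl _, hlo, h0, fun i h1 h2 => by omega⟩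
    · right; intro i h1 h2; omega

lemma twoConsecutiveFires (d : ℕ → ℤ) (hi : ℕ) :
    ∀ k lo, hi - lo ≤ k →
      (∀ i, lo ≤ i → i < hi → d i = 1 ∨ d i = -1 ∨ d i = 0) →
      2 ≤ ∑ i ∈ Finset.Ico lo hi, d i →
      ∃ a b, lo ≤ a ∧ a < b ∧ b < hi ∧ d a = 1 ∧ d b = 1 ∧
        ∀ i, a < i → i < b → d i = 0 := by
  intro k
  induction k with
  | zero =>
    intro lo hk hd hsum
    rw [Finset.Ico_eq_empty (by omega : ¬ lo < hi)] at hsum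
    simp at hsum
  | succ k ih =>
    intro lo hk hd hsum
    have hlo : lo < hi := by
      by_contra h
      rw [Finset.Ico_eq_empty h] at hsum
      simp at hsum
    have hbot : ∑ i ∈ Finset.Ico lo hi, d i
        = d lo + ∑ i ∈ Finset.Ico (lo+1) hi, d i :=
      Finset.sum_eq_sum_Ico_succ_bot hlo d
    rcases hd lo (le_refl _) hlo with h0 | h0 | h0
    · -- d lo = 1 : look for the next nonzero entry
      rcases firstNonzero d (hi - (lo+1)) (lo+1) hi (le_refl _) with
        ⟨j, hj1, hj2, hj3, hj4⟩ | hall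
      · rcases hd j (by omega) hj2 with hj | hj | hj
        · -- next nonzero is also a fire: done
          exact ⟨lo, j, le_refl _, by omega, hj2, h0, hj,
            fun i h1 h2 => hj4 i (by omega) h2⟩
        · -- next nonzero is an antifire: restart after it
          have e1 : ∑ i ∈ Finset.Ico lo hi, d i
              = (∑ i ∈ Finset.Ico lo (j+1), d i) + ∑ i ∈ Finset.Ico (j+1) hi, d i :=
            (Finset.sum_Ico_consecutive d (by omega) (by omega)).symm
          have e2 : ∑ i ∈ Finset.Ico lo (j+1), d i
              = (∑ i ∈ Finset.Ico lo j, d i) + d j :=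
            Finset.sum_Ico_succ_top (by omega) d
          have e3 : ∑ i ∈ Finset.Ico lo j, d i
              = d lo + ∑ i ∈ Finset.Ico (lo+1) j, d i :=
            Finset.sum_eq_sum_Ico_succ_bot (by omega) d
          have e4 : ∑ i ∈ Finset.Ico (lo+1) j, d i = 0 :=
            Finset.sum_eq_zero (fun i hi' => by
              have := Finset.mem_Ico.mp hi'
              exact hj4 i this.1 this.2)
          have hsum' : 2 ≤ ∑ i ∈ Finset.Ico (j+1) hi, d i := by
            rw [e1, e2, e3, e4, h0, hj] at hsum; linarith
          obtain ⟨a, b, ha1, ha2, ha3, ha4, ha5, ha6⟩ :=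
            ih (j+1) (by omega) (fun i h1 h2 => hd i (by omega) h2) hsum'
          exact ⟨a, b, by omega, ha2, ha3, ha4, ha5, ha6⟩
        · exact absurd hj hj3
      · -- everything after lo is zero: sum is 1, contradiction
        have e : ∑ i ∈ Finset.Ico (lo+1) hi, d i = 0 :=
          Finset.sum_eq_zero (fun i hi' => by
            have := Finset.mem_Ico.mp hi'
            exact hall i this.1 this.2)
        rw [hbot, e, h0] at hsum; linarith
    · -- d lo = -1
      have hsum' : 2 ≤ ∑ i ∈ Finset.Ico (lo+1) hi, d i := by
        rw [hbot, h0] at hsum; linarith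
      obtain ⟨a, b, ha1, ha2, ha3, ha4, ha5, ha6⟩ :=
        ih (lo+1) (by omega) (fun i h1 h2 => hd i (by omega) h2) hsum'
      exact ⟨a, b, by omega, ha2, ha3, ha4, ha5, ha6⟩
    · -- d lo = 0
      have hsum' : 2 ≤ ∑ i ∈ Finset.Ico (lo+1) hi, d i := by
        rw [hbot, h0] at hsum; linarith
      obtain ⟨a, b, ha1, ha2, ha3, ha4, ha5, ha6⟩ :=
        ih (lo+1) (by omega) (fun i h1 h2 => hd i (by omega) h2) hsum'
      exact ⟨a, b, by omega, ha2, ha3, ha4, ha5, ha6⟩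


lemma netFire_sub_eq (vtx : ℕ → V) (dir : ℕ → ℤ) {a b : ℕ} (hab : a ≤ b) (z : V) :
    netFire vtx dir b z - netFire vtx dir a z
      = ∑ i ∈ Finset.Ico a b, (if vtx i = z then dir i else 0) := by
  unfold netFire
  rw [Finset.range_eq_Ico, ← Finset.sum_Ico_consecutive _ (Nat.zero_le a) hab, Finset.range_eq_Ico]
  ring

lemma descent (G : SimpleGraph V) [DecidableRel G.Adj] [G.LocallyFinite]
    (n : ℕ) (f : ℕ → V → ℕ) (vtx : ℕ → V) (dir : ℕ → ℤ)
    (hgs : ∀ i < n, (dir i = 1 ∧ fireStep G (vtx i) (f i) (f (i+1))) ∨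
      (dir i = -1 ∧ antifireStep G (vtx i) (f i) (f (i+1)))) :
    ∀ k a b x y, b - a ≤ k → a < b → b < n →
      vtx a = y → dir a = 1 → vtx b = y → dir b = 1 →
      (∀ i, a < i → i < b → vtx i ≠ y) → G.Adj x y →
      (∀ i, a ≤ i → i ≤ b → vtx i ≠ x) → False := by
  intro k
  induction k with
  | zero => intro a b x y hk hab; omega
  | succ k ih =>
    intro a b x y hk hab hbn hva hda hvb hdb hgap hadj hxfr
    -- the two fire steps of y
    have fireA : fireStep G y (f a) (f (a+1)) := by
      rcases hgs a (by omega) with ⟨_, hF⟩ | ⟨hd, _⟩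
      · rwa [hva] at hF
      · rw [hda] at hd; omega
    have fireB : fireStep G y (f b) (f (b+1)) := by
      rcases hgs b hbn with ⟨_, hF⟩ | ⟨hd, _⟩
      · rwa [hvb] at hF
      · rw [hdb] at hd; omega
    have hA : f (a+1) y = 0 := fireA.2.2.1
    have hB : f b y = G.degree y := fireB.1
    have F1 := netFire_formula G n f vtx dir hgs (a+1) (by omega) y
    have F2 := netFire_formula G n f vtx dir hgs b (by omega) y
    have hIco : ∀ z, netFire vtx dir b z - netFire vtx dir (a+1) z
        = ∑ i ∈ Finset.Ico (a+1) b, (if vtx i = z then dir i else 0) :=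
      fun z => netFire_sub_eq vtx dir (by omega) z
    have hDy : netFire vtx dir b y - netFire vtx dir (a+1) y = 0 := by
      rw [hIco y]
      exact Finset.sum_eq_zero (fun i hi' => by
        have h := Finset.mem_Ico.mp hi'
        rw [if_neg (hgap i (by omega) h.2)])
    have hDx : netFire vtx dir b x - netFire vtx dir (a+1) x = 0 := by
      rw [hIco x]
      exact Finset.sum_eq_zero (fun i hi' => by
        have h := Finset.mem_Ico.mp hi'
        rw [if_neg (hxfr i (by omega) (by omega))])
    have hxmem : x ∈ G.neighborFinset y := by
      rw [SimpleGraph.mem_neighborFinset]; exact hadj.symm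
    have key : (G.degree y : ℤ)
        = ∑ z ∈ G.neighborFinset y \ {x},
            (netFire vtx dir b z - netFire vtx dir (a+1) z) := by
      have e : (f b y : ℤ) - (f (a+1) y : ℤ)
          = (∑ z ∈ G.neighborFinset y,
              (netFire vtx dir b z - netFire vtx dir (a+1) z))
            - (G.degree y : ℤ) * (netFire vtx dir b y - netFire vtx dir (a+1) y) := by
        rw [Finset.sum_sub_distrib, F2, F1]; ring
      rw [hDy, hA, hB] at e
      rw [Finset.sum_eq_sum_sdiff_singleton_add hxmem
        (fun z => netFire vtx dir b z - netFire vtx dir (a+1) z), hDx] at e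
      push_cast at e ⊢
      linarith
    have hcard : (G.neighborFinset y \ {x}).card = G.degree y - 1 := by
      rw [Finset.card_sdiff_of_subset (Finset.singleton_subset_iff.mpr hxmem)]
      simp [SimpleGraph.card_neighborFinset_eq_degree]
    have hdegpos : 1 ≤ G.degree y := by
      have : 0 < (G.neighborFinset y).card := Finset.card_pos.mpr ⟨x, hxmem⟩
      exact (by simpa [SimpleGraph.card_neighborFinset_eq_degree] using this : 0 < G.degree y)
    have hex : ∃ z ∈ G.neighborFinset y \ {x},
        2 ≤ netFire vtx dir b z - netFire vtx dir (a+1) z := by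
      by_contra hno
      push_neg at hno
      have hle : ∑ z ∈ G.neighborFinset y \ {x},
          (netFire vtx dir b z - netFire vtx dir (a+1) z)
          ≤ (G.neighborFinset y \ {x}).card • (1 : ℤ) :=
        Finset.sum_le_card_nsmul _ _ 1 (fun z hz => by linarith [hno z hz])
      rw [hcard] at hle
      rw [← key] at hle
      have : ((G.degree y - 1 : ℕ) : ℤ) = (G.degree y : ℤ) - 1 := by
        push_cast [hdegpos]; omega
      simp only [nsmul_eq_mul, mul_one] at hle
      omega
    obtain ⟨z, hzmem, hz2⟩ := hex
    have hzadj : G.Adj y z := by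
      have := (Finset.mem_sdiff.mp hzmem).1
      rwa [SimpleGraph.mem_neighborFinset] at this
    rw [hIco z] at hz2
    obtain ⟨a', b', h1, h2, h3, h4, h5, h6⟩ :=
      twoConsecutiveFires (fun i => if vtx i = z then dir i else 0) b
        (b - (a+1)) (a+1) (le_refl _)
        (fun i hi1 hi2 => by
          show (if vtx i = z then dir i else 0) = 1 ∨
            (if vtx i = z then dir i else 0) = -1 ∨ (if vtx i = z then dir i else 0) = 0
          rcases hgs i (by omega) with ⟨hd, _⟩ | ⟨hd, _⟩ <;>
            · by_cases hvz : vtx i = z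
              · rw [if_pos hvz, hd]; tauto
              · rw [if_neg hvz]; tauto)
        hz2
    have h4' : (if vtx a' = z then dir a' else 0) = 1 := h4
    have h5' : (if vtx b' = z then dir b' else 0) = 1 := h5
    have hva' : vtx a' = z := by
      by_contra h; rw [if_neg h] at h4'; exact one_ne_zero h4'.symm
    have hda' : dir a' = 1 := by rwa [if_pos hva'] at h4'
    have hvb' : vtx b' = z := by
      by_contra h; rw [if_neg h] at h5'; exact one_ne_zero h5'.symm
    have hdb' : dir b' = 1 := by rwa [if_pos hvb'] at h5'
    have hgap' : ∀ i, a' < i → i < b' → vtx i ≠ z := by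
      intro i hi1 hi2 hvz
      have h0 : (if vtx i = z then dir i else 0) = 0 := h6 i hi1 hi2
      rw [if_pos hvz] at h0
      rcases hgs i (by omega) with ⟨hd, _⟩ | ⟨hd, _⟩ <;> omega
    exact ih a' b' y z (by omega) h2 (by omega) hva' hda' hvb' hdb' hgap'
      hzadj (fun i hi1 hi2 => hgap i (by omega) (by omega))


/-- If `R` is a set of vertices each of which has a neighbor in `R`, and the
initial configuration vanishes on `R̄ = R ∪ (neighborhoods of R)`, then every configuration
reachable by allowed moves still vanishes on `R`: the sites of `R` are frozen forever. -/
theorem frozen_region (G : SimpleGraph V) [DecidableRel G.Adj] [G.LocallyFinite]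
    (R : Set V) (hR : ∀ v ∈ R, ∃ w ∈ R, G.Adj v w)
    (m₀ : V → ℕ) (hbound : ∀ w, m₀ w ≤ G.degree w)
    (hinit : ∀ w ∈ R ∪ ⋃ v ∈ R, (G.neighborSet v : Set V), m₀ w = 0) :
    ∀ m, Relation.ReflTransGen (moveStep G) m₀ m → ∀ v ∈ R, m v = 0 := by
  intro m hreach v hvR
  haveI : Nonempty V := ⟨v⟩
  set Rb : Set V := R ∪ ⋃ v ∈ R, (G.neighborSet v : Set V) with hRbdef
  obtain ⟨n, f, h0, hn, hs⟩ := exists_chain G hreach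
  have hsel : ∀ i, ∃ vd : V × ℤ, i < n →
      ((vd.2 = 1 ∧ fireStep G vd.1 (f i) (f (i+1))) ∨
       (vd.2 = -1 ∧ antifireStep G vd.1 (f i) (f (i+1)))) := by
    intro i
    by_cases hi : i < n
    · obtain ⟨w, hw⟩ := hs i hi
      rcases hw with hF | hA
      · exact ⟨(w, 1), fun _ => Or.inl ⟨rfl, hF⟩⟩
      · exact ⟨(w, -1), fun _ => Or.inr ⟨rfl, hA⟩⟩
    · exact ⟨(Classical.arbitrary V, 1), fun h => absurd h hi⟩
  choose vd hvd using hsel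
  set vtx : ℕ → V := fun i => (vd i).1 with hvtxdef
  set dir : ℕ → ℤ := fun i => (vd i).2 with hdirdef
  have hgs : ∀ i < n, (dir i = 1 ∧ fireStep G (vtx i) (f i) (f (i+1))) ∨
      (dir i = -1 ∧ antifireStep G (vtx i) (f i) (f (i+1))) := fun i hi => hvd i hi
  have hRsub : ∀ u ∈ R, u ∈ Rb := fun u hu => Or.inl hu
  have hNRb : ∀ u ∈ R, ∀ z, G.Adj u z → z ∈ Rb := by
    intro u hu z hz
    exact Or.inr (Set.mem_biUnion hu hz)
  -- main claim: no vertex of Rb ever moves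
  have main : ∀ i < n, vtx i ∉ Rb := by
    by_contra hbad
    push_neg at hbad
    obtain ⟨b₀, hb₀n, hb₀Rb⟩ := hbad
    have hP : ∃ i, i < n ∧ vtx i ∈ Rb := ⟨b₀, hb₀n, hb₀Rb⟩
    set b := Nat.find hP with hbdef
    obtain ⟨hbn, hbRb⟩ := Nat.find_spec hP
    have hfrozen : ∀ i < b, vtx i ∉ Rb := by
      intro i hi hmem
      exact Nat.find_min hP hi ⟨by omega, hmem⟩
    have hH0 : ∀ z ∈ Rb, netFire vtx dir b z = 0 := by
      intro z hz
      apply Finset.sum_eq_zero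
      intro i hi
      rw [if_neg]
      intro he
      exact hfrozen i (Finset.mem_range.mp hi) (he ▸ hz)
    have hRzero : ∀ u ∈ R, f b u = 0 := by
      intro u hu
      have hform := netFire_formula G n f vtx dir hgs b (le_of_lt hbn) u
      rw [h0] at hform
      have h1 : netFire vtx dir b u = 0 := hH0 u (hRsub u hu)
      have h2 : ∑ z ∈ G.neighborFinset u, netFire vtx dir b z = 0 :=
        Finset.sum_eq_zero (fun z hz => hH0 z
          (hNRb u hu z ((G.mem_neighborFinset _ _).mp hz)))
      rw [h1, h2, hinit u (Or.inl hu)] at hform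
      simpa using hform
    set w := vtx b with hwdef
    have hw : w ∈ Rb := hbRb
    have hexu : ∃ u ∈ R, G.Adj w u := by
      rcases hw with hwR | hwN
      · exact hR w hwR
      · rw [Set.mem_iUnion₂] at hwN
        obtain ⟨u, hu, hadj⟩ := hwN
        exact ⟨u, hu, (SimpleGraph.mem_neighborSet G u w |>.mp hadj).symm⟩
    obtain ⟨u, huR, hadjwu⟩ := hexu
    rcases hgs b hbn with ⟨hd, hF⟩ | ⟨hd, hA⟩
    · -- a fire at w
      have hfw : f b w = G.degree w := hF.1
      have hw2 := hw
      rcases hw2 with hwR | hwN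
      · have h0w : f b w = 0 := hRzero w hwR
        have hdw : 0 < G.degree w := by
          rw [SimpleGraph.degree_pos_iff_exists_adj]; exact ⟨u, hadjwu⟩
        omega
      · have hform := netFire_formula G n f vtx dir hgs b (le_of_lt hbn) w
        rw [h0] at hform
        have hm0w : m₀ w = 0 := hinit w (Or.inr hwN)
        have hHw : netFire vtx dir b w = 0 := hH0 w hw
        rw [hfw, hm0w, hHw] at hform
        have humem : u ∈ G.neighborFinset w := (G.mem_neighborFinset _ _).mpr hadjwu
        have hHu : netFire vtx dir b u = 0 := hH0 u (hRsub u huR)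
        have key : (G.degree w : ℤ)
            = ∑ z ∈ G.neighborFinset w \ {u}, netFire vtx dir b z := by
          rw [Finset.sum_eq_sum_sdiff_singleton_add humem (netFire vtx dir b), hHu] at hform
          push_cast at hform ⊢
          linarith
        have hcard : (G.neighborFinset w \ {u}).card = G.degree w - 1 := by
          rw [Finset.card_sdiff_of_subset (Finset.singleton_subset_iff.mpr humem)]
          simp [SimpleGraph.card_neighborFinset_eq_degree]
        have hdegpos : 1 ≤ G.degree w := by
          have : 0 < (G.neighborFinset w).card := Finset.card_pos.mpr ⟨u, humem⟩
          exact (by simpa [SimpleGraph.card_neighborFinset_eq_degree] using this : 0 < G.degree w)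
        have hex : ∃ z ∈ G.neighborFinset w \ {u}, 2 ≤ netFire vtx dir b z := by
          by_contra hno
          push_neg at hno
          have hle : ∑ z ∈ G.neighborFinset w \ {u}, netFire vtx dir b z
              ≤ (G.neighborFinset w \ {u}).card • (1 : ℤ) :=
            Finset.sum_le_card_nsmul _ _ 1 (fun z hz => by linarith [hno z hz])
          rw [hcard, ← key] at hle
          simp only [nsmul_eq_mul, mul_one] at hle
          omega
        obtain ⟨z, hzmem, hz2⟩ := hex
        have hzadj : G.Adj w z := by
          have := (Finset.mem_sdiff.mp hzmem).1
          rwa [SimpleGraph.mem_neighborFinset] at this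
        have hz2' : 2 ≤ ∑ i ∈ Finset.Ico 0 b, (if vtx i = z then dir i else 0) := by
          rwa [netFire, Finset.range_eq_Ico] at hz2
        obtain ⟨a', b', h1, h2, h3, h4, h5, h6⟩ :=
          twoConsecutiveFires (fun i => if vtx i = z then dir i else 0) b
            b 0 (le_refl _)
            (fun i hi1 hi2 => by
              show (if vtx i = z then dir i else 0) = 1 ∨
                (if vtx i = z then dir i else 0) = -1 ∨
                (if vtx i = z then dir i else 0) = 0
              rcases hgs i (by omega) with ⟨hdi, _⟩ | ⟨hdi, _⟩ <;>
                · by_cases hvz : vtx i = z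
                  · rw [if_pos hvz, hdi]; tauto
                  · rw [if_neg hvz]; tauto)
            hz2'
        have h4' : (if vtx a' = z then dir a' else 0) = 1 := h4
        have h5' : (if vtx b' = z then dir b' else 0) = 1 := h5
        have hva' : vtx a' = z := by
          by_contra h; rw [if_neg h] at h4'; exact one_ne_zero h4'.symm
        have hda' : dir a' = 1 := by rwa [if_pos hva'] at h4'
        have hvb' : vtx b' = z := by
          by_contra h; rw [if_neg h] at h5'; exact one_ne_zero h5'.symm
        have hdb' : dir b' = 1 := by rwa [if_pos hvb'] at h5'
        have hgap' : ∀ i, a' < i → i < b' → vtx i ≠ z := by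
          intro i hi1 hi2 hvz
          have h0i : (if vtx i = z then dir i else 0) = 0 := h6 i hi1 hi2
          rw [if_pos hvz] at h0i
          rcases hgs i (by omega) with ⟨hdi, _⟩ | ⟨hdi, _⟩ <;> omega
        exact descent G n f vtx dir hgs (b' - a') a' b' w z (le_refl _) h2
          (by omega) hva' hda' hvb' hdb' hgap' hzadj
          (fun i hi1 hi2 hiw => hfrozen i (by omega) (hiw ▸ hw))
    · -- an antifire at w: blocked by the zero R-neighbor u
      have h1 := hA.2.1 u hadjwu
      rw [hRzero u huR] at h1
      omega
  -- conclusion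
  have hH0n : ∀ z ∈ Rb, netFire vtx dir n z = 0 := by
    intro z hz
    apply Finset.sum_eq_zero
    intro i hi
    rw [if_neg]
    intro he
    exact main i (Finset.mem_range.mp hi) (he ▸ hz)
  have hform := netFire_formula G n f vtx dir hgs n (le_refl _) v
  rw [h0, hn] at hform
  have h1 : netFire vtx dir n v = 0 := hH0n v (hRsub v hvR)
  have h2 : ∑ z ∈ G.neighborFinset v, netFire vtx dir n z = 0 :=
    Finset.sum_eq_zero (fun z hz => hH0n z
      (hNRb v hvR z ((G.mem_neighborFinset _ _).mp hz)))
  rw [h1, h2, hinit v (Or.inl hvR)] at hform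
  simpa using hform
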